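/- Let X_1, X_2 be random variables on a measurable space with densities f_1, f_2 with respect to a dominating measure. Suppose that almost surely P(X_2 = X_1 | X_1) ≥ ε·min(1, f_2(X_1)/f_1(X_1)) for some ε > 0. Then almost surely P(X_1 = X_2 | X_2) ≥ ε·min(1, f_1(X_2)/f_2(X_2)). -/

import Mathlib

open MeasureTheory Classical

private lemma min_toReal_mul {a b : ℝ} (ha : 0 ≤ a) (hb : 0 ≤ b) :
    (min 1 (ENNReal.ofReal b / ENNReal.ofReal a)).toReal * a = min a b := by
  rcases eq_or_lt_of_le ha with h | h
  · rw [← h]; simp [min_eq_left hb]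
  · rw [← ENNReal.ofReal_div_of_pos h,
      ENNReal.toReal_min ENNReal.one_ne_top ENNReal.ofReal_ne_top,
      ENNReal.toReal_one, ENNReal.toReal_ofReal (div_nonneg hb h.le)]
    rcases le_total a b with hab | hab
    · rw [min_eq_left ((one_le_div h).mpr hab), one_mul, min_eq_left hab]
    · rw [min_eq_right ((div_le_one h).mpr hab), div_mul_cancel₀ _ h.ne', min_eq_right hab]

/-- Symmetry of the ε-efficiency condition for a coupling: if `X₁, X₂` have
densities `f₁, f₂` w.r.t. a dominating measure and a.s.
`P(X₂ = X₁ | X₁) ≥ ε·min(1, f₂(X₁)/f₁(X₁))`, then a.s.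
`P(X₁ = X₂ | X₂) ≥ ε·min(1, f₁(X₂)/f₂(X₂))`. -/
theorem stmt_10 {Ω 𝒳 : Type*} {m0 : MeasurableSpace Ω} [MeasurableSpace 𝒳]
    (P : Measure Ω) [IsProbabilityMeasure P]
    (lam : Measure 𝒳) [SigmaFinite lam]
    (X1 X2 : Ω → 𝒳) (hX1 : Measurable X1) (hX2 : Measurable X2)
    (f1 f2 : 𝒳 → ℝ) (hf1 : Measurable f1) (hf2 : Measurable f2)
    (hf1nn : ∀ x, 0 ≤ f1 x) (hf2nn : ∀ x, 0 ≤ f2 x)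
    (hlaw1 : Measure.map X1 P = lam.withDensity (fun x => ENNReal.ofReal (f1 x)))
    (hlaw2 : Measure.map X2 P = lam.withDensity (fun x => ENNReal.ofReal (f2 x)))
    (eps : ℝ) (heps : 0 < eps)
    (hforward :
      (fun ω => eps *
          (min 1 (ENNReal.ofReal (f2 (X1 ω)) / ENNReal.ofReal (f1 (X1 ω)))).toReal)
        ≤ᵐ[P]
      P[(fun ω => if X1 ω = X2 ω then (1:ℝ) else 0) |
          MeasurableSpace.comap X1 inferInstance]) :
    (fun ω => eps *
        (min 1 (ENNReal.ofReal (f1 (X2 ω)) / ENNReal.ofReal (f2 (X2 ω)))).toReal)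
      ≤ᵐ[P]
    P[(fun ω => if X1 ω = X2 ω then (1:ℝ) else 0) |
        MeasurableSpace.comap X2 inferInstance] := by
  set ind : Ω → ℝ := fun ω => if X1 ω = X2 ω then (1:ℝ) else 0 with hind_def
  have hm1 : MeasurableSpace.comap X1 inferInstance ≤ m0 := measurable_iff_comap_le.mp hX1
  have hm2 : MeasurableSpace.comap X2 inferInstance ≤ m0 := measurable_iff_comap_le.mp hX2
  -- generic transfer of set integrals of the efficiency bound to `lam`
  have aux : ∀ (X : Ω → 𝒳), Measurable X → ∀ (fa fb : 𝒳 → ℝ),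
      Measurable fa → Measurable fb → (∀ x, 0 ≤ fa x) → (∀ x, 0 ≤ fb x) →
      Measure.map X P = lam.withDensity (fun x => ENNReal.ofReal (fa x)) →
      ∀ B : Set 𝒳, MeasurableSet B →
      ∫ ω in X ⁻¹' B,
          eps * (min 1 (ENNReal.ofReal (fb (X ω)) / ENNReal.ofReal (fa (X ω)))).toReal ∂P
        = ∫ x in B, eps * min (fa x) (fb x) ∂lam := by
    intro X hX fa fb hfa hfb hfann hfbnn hlaw B hB
    have hgm : Measurable fun x =>
        eps * (min 1 (ENNReal.ofReal (fb x) / ENNReal.ofReal (fa x))).toReal :=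
      ((measurable_const.min (hfb.ennreal_ofReal.div hfa.ennreal_ofReal)).ennreal_toReal).const_mul eps
    rw [← setIntegral_map hB hgm.aestronglyMeasurable hX.aemeasurable, hlaw]
    have hdens : (fun x => ENNReal.ofReal (fa x)) = fun x => ((fa x).toNNReal : ENNReal) := rfl
    rw [hdens, setIntegral_withDensity_eq_setIntegral_smul hfa.real_toNNReal _ hB]
    refine setIntegral_congr_fun hB fun x _ => ?_
    calc ((fa x).toNNReal : NNReal) •
          (eps * (min 1 (ENNReal.ofReal (fb x) / ENNReal.ofReal (fa x))).toReal)
        = fa x * (eps * (min 1 (ENNReal.ofReal (fb x) / ENNReal.ofReal (fa x))).toReal) := by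
          rw [NNReal.smul_def, Real.coe_toNNReal _ (hfann x), smul_eq_mul]
      _ = eps * ((min 1 (ENNReal.ofReal (fb x) / ENNReal.ofReal (fa x))).toReal * fa x) := by ring
      _ = eps * min (fa x) (fb x) := by rw [min_toReal_mul (hfann x) (hfbnn x)]
  -- integrability of the two bound functions
  have hg : Measurable fun x =>
      eps * (min 1 (ENNReal.ofReal (f1 x) / ENNReal.ofReal (f2 x))).toReal :=
    ((measurable_const.min (hf1.ennreal_ofReal.div hf2.ennreal_ofReal)).ennreal_toReal).const_mul eps
  have hh : Measurable fun x =>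
      eps * (min 1 (ENNReal.ofReal (f2 x) / ENNReal.ofReal (f1 x))).toReal :=
    ((measurable_const.min (hf2.ennreal_ofReal.div hf1.ennreal_ofReal)).ennreal_toReal).const_mul eps
  have bound : ∀ (c : ENNReal), ‖eps * (min 1 c).toReal‖ ≤ eps := by
    intro c
    have h1 : (min 1 c).toReal ≤ 1 := by
      simpa using ENNReal.toReal_mono ENNReal.one_ne_top (min_le_left 1 c)
    have h0 : (0:ℝ) ≤ (min 1 c).toReal := ENNReal.toReal_nonneg
    rw [Real.norm_eq_abs, abs_mul, abs_of_pos heps, abs_of_nonneg h0]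
    nlinarith
  have int_g : Integrable (fun ω =>
      eps * (min 1 (ENNReal.ofReal (f1 (X2 ω)) / ENNReal.ofReal (f2 (X2 ω)))).toReal) P :=
    ⟨(hg.comp hX2).aestronglyMeasurable,
      HasFiniteIntegral.of_bounded (C := eps) (Filter.Eventually.of_forall fun ω => bound _)⟩
  have int_h : Integrable (fun ω =>
      eps * (min 1 (ENNReal.ofReal (f2 (X1 ω)) / ENNReal.ofReal (f1 (X1 ω)))).toReal) P :=
    ⟨(hh.comp hX1).aestronglyMeasurable,
      HasFiniteIntegral.of_bounded (C := eps) (Filter.Eventually.of_forall fun ω => bound _)⟩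
  -- the key set-integral inequality over `σ(X2)`-measurable sets
  have key : ∀ B : Set 𝒳, MeasurableSet B →
      ∫ ω in X2 ⁻¹' B,
          eps * (min 1 (ENNReal.ofReal (f1 (X2 ω)) / ENNReal.ofReal (f2 (X2 ω)))).toReal ∂P
        ≤ ∫ ω in X2 ⁻¹' B, (P[ind | MeasurableSpace.comap X2 inferInstance]) ω ∂P := by
    intro B hB
    have h1 := aux X2 hX2 f2 f1 hf2 hf1 hf2nn hf1nn hlaw2 B hB
    have h2 := aux X1 hX1 f1 f2 hf1 hf2 hf1nn hf2nn hlaw1 B hB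
    have hmincomm : ∫ x in B, eps * min (f2 x) (f1 x) ∂lam
        = ∫ x in B, eps * min (f1 x) (f2 x) ∂lam := by
      simp_rw [min_comm (f2 _) (f1 _)]
    have step1 : ∫ ω in X1 ⁻¹' B,
          eps * (min 1 (ENNReal.ofReal (f2 (X1 ω)) / ENNReal.ofReal (f1 (X1 ω)))).toReal ∂P
        ≤ ∫ ω in X1 ⁻¹' B, (P[ind | MeasurableSpace.comap X1 inferInstance]) ω ∂P :=
      setIntegral_mono_ae int_h.integrableOn integrable_condExp.integrableOn hforward
    have step2 : ∫ ω in X1 ⁻¹' B, (P[ind | MeasurableSpace.comap X1 inferInstance]) ω ∂P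
        ≤ ∫ ω in X2 ⁻¹' B, (P[ind | MeasurableSpace.comap X2 inferInstance]) ω ∂P := by
      by_cases hInt : Integrable ind P
      · rw [setIntegral_condExp hm1 hInt ⟨B, hB, rfl⟩,
          setIntegral_condExp hm2 hInt ⟨B, hB, rfl⟩]
        refine le_of_eq ?_
        rw [← integral_indicator (hX1 hB), ← integral_indicator (hX2 hB)]
        refine integral_congr_ae (Filter.Eventually.of_forall fun ω => ?_)
        by_cases hω : X1 ω = X2 ω
        · simp [Set.indicator_apply, Set.mem_preimage, hω, hind_def]
        · simp [Set.indicator_apply, Set.mem_preimage, hω, hind_def]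
      · rw [condExp_of_not_integrable hInt, condExp_of_not_integrable hInt]
        simp
    calc ∫ ω in X2 ⁻¹' B,
          eps * (min 1 (ENNReal.ofReal (f1 (X2 ω)) / ENNReal.ofReal (f2 (X2 ω)))).toReal ∂P
        = ∫ x in B, eps * min (f1 x) (f2 x) ∂lam := by rw [h1, hmincomm]
      _ = ∫ ω in X1 ⁻¹' B,
          eps * (min 1 (ENNReal.ofReal (f2 (X1 ω)) / ENNReal.ofReal (f1 (X1 ω)))).toReal ∂P :=
          h2.symm
      _ ≤ ∫ ω in X1 ⁻¹' B, (P[ind | MeasurableSpace.comap X1 inferInstance]) ω ∂P := step1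
      _ ≤ ∫ ω in X2 ⁻¹' B, (P[ind | MeasurableSpace.comap X2 inferInstance]) ω ∂P := step2
  -- pass to the trimmed measure and conclude
  have hmX2 : Measurable[MeasurableSpace.comap X2 inferInstance] X2 :=
    measurable_iff_comap_le.mpr le_rfl
  have smg : StronglyMeasurable[MeasurableSpace.comap X2 inferInstance] (fun ω =>
      eps * (min 1 (ENNReal.ofReal (f1 (X2 ω)) / ENNReal.ofReal (f2 (X2 ω)))).toReal) :=
    (hg.comp hmX2).stronglyMeasurable
  refine ae_le_of_ae_le_trim (hm := hm2) ?_
  refine ae_le_of_forall_setIntegral_le (μ := P.trim hm2)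
    (int_g.trim hm2 smg)
    (integrable_condExp.trim hm2 stronglyMeasurable_condExp) ?_
  rintro s ⟨B, hB, rfl⟩ -
  rw [← setIntegral_trim hm2 smg ⟨B, hB, rfl⟩,
    ← setIntegral_trim hm2 stronglyMeasurable_condExp ⟨B, hB, rfl⟩]
  exact key B hB
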